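/- arXiv:1509.08362 — 2 statements merged into one kernel-verified Lean document; each statement's English description precedes it below -/
import Mathlib

section
/- Let X be a standard Borel space, n ≥ 1, and let P and Q be Markov kernels on X^n such that Q(x, A) ≥ (1−ε)·P(x, A) for all x ∈ X^n and measurable A ⊆ X^n, where ε ∈ [0,1]. Suppose that for every j ∈ {1,…,n} and every pair x, y ∈ X^n with x_k = y_k for all k ≠ j, a coupling Ψ_{j,x,y} of P(x,·) and P(y,·) is given, and define the n×n matrix W by W_{i,j} = sup{Ψ_{j,x,y}({(x', y') : x'_i ≠ y'_i}) : x, y ∈ X^n with x_k = y_k for all k ≠ j}. Then the matrix Ŵ with entries Ŵ_{i,j} = W_{i,j} + ε is a Wasserstein matrix for Q. -/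
open MeasureTheory ProbabilityTheory Finset
open scoped ENNReal

/-- Oscillation of `f` with respect to the `i`-th coordinate. -/
noncomputable def osc {n : ℕ} {X : Type*} (i : Fin n) (f : (Fin n → X) → ℝ) : ℝ :=
  sSup {d : ℝ | ∃ x z : Fin n → X, (∀ k, k ≠ i → x k = z k) ∧ d = |f x - f z|}

/-- `W` is a Wasserstein matrix for the Markov kernel `P` on `X^n`. -/
def IsWassersteinMatrix {n : ℕ} {X : Type*} [MeasurableSpace X]
    (P : Kernel (Fin n → X) (Fin n → X)) (W : Matrix (Fin n) (Fin n) ℝ) : Prop :=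
  (∀ i j, 0 ≤ W i j) ∧
  ∀ f : (Fin n → X) → ℝ, Measurable f → (∃ C, ∀ x, |f x| ≤ C) →
    ∀ j, osc j (fun x => ∫ y, f y ∂(P x)) ≤ ∑ i, osc i f * W i j

/-- `Ψ` is a coupling of `μ` and `ν`. -/
def IsCoupling {E : Type*} [MeasurableSpace E] (Ψ : Measure (E × E)) (μ ν : Measure E) : Prop :=
  Ψ.map Prod.fst = μ ∧ Ψ.map Prod.snd = ν

/-- `k`-fold composition of a Markov kernel with itself. -/
noncomputable def kpow {E : Type*} [MeasurableSpace E] (P : Kernel E E) : ℕ → Kernel E E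
  | 0 => Kernel.id
  | (k + 1) => P ∘ₖ kpow P k

/-- Maximum absolute row sum norm `‖A‖_∞`. -/
noncomputable def rowNorm {n : ℕ} (A : Matrix (Fin n) (Fin n) ℝ) : ℝ :=
  ⨆ i, ∑ j, |A i j|

lemma telescope_aux {n : ℕ} {X : Type*} [DecidableEq X] (f : (Fin n → X) → ℝ) (o : Fin n → ℝ)
    (ho : ∀ (i : Fin n) (a b : Fin n → X), (∀ k, k ≠ i → a k = b k) → f a - f b ≤ o i)
    (u v : Fin n → X) :
    f u - f v ≤ ∑ i, (if u i = v i then 0 else o i) := by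
  set g : ℕ → Fin n → X := fun k i => if (i : ℕ) < k then v i else u i with hg
  have hg0 : g 0 = u := by funext i; simp [hg]
  have hgn : g n = v := by funext i; simp [hg, i.isLt]
  have key : ∀ i : Fin n, f (g i) - f (g (i + 1)) ≤ (if u i = v i then 0 else o i) := by
    intro i
    by_cases h : u i = v i
    · have : g (i : ℕ) = g ((i : ℕ) + 1) := by
        funext k
        simp only [hg]
        rcases lt_trichotomy (k : ℕ) (i : ℕ) with hk | hk | hk
        · simp [hk, Nat.lt_succ_of_lt hk]
        · have hk' : (k : ℕ) < (i : ℕ) + 1 := by omega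
          have hki : k = i := Fin.ext hk
          simp [hk, hk', hki, h]
        · have h1 : ¬ (k : ℕ) < (i : ℕ) := by omega
          have h2 : ¬ (k : ℕ) < (i : ℕ) + 1 := by omega
          simp [h1, h2]
      rw [if_pos h, this]; simp
    · rw [if_neg h]
      apply ho i
      intro k hk
      have hki : (k : ℕ) ≠ (i : ℕ) := fun e => hk (Fin.ext e)
      simp only [hg]
      by_cases hlt : (k : ℕ) < (i : ℕ)
      · simp [hlt, Nat.lt_succ_of_lt hlt]
      · have h2 : ¬ (k : ℕ) < (i : ℕ) + 1 := by omega
        simp [hlt, h2]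
  calc f u - f v = f (g 0) - f (g n) := by rw [hg0, hgn]
    _ = ∑ k ∈ Finset.range n, (f (g k) - f (g (k + 1))) := (Finset.sum_range_sub' (f ∘ g) n).symm
    _ = ∑ i : Fin n, (f (g i) - f (g ((i : ℕ) + 1))) :=
        (Fin.sum_univ_eq_sum_range (fun k => f (g k) - f (g (k + 1))) n).symm
    _ ≤ ∑ i, (if u i = v i then 0 else o i) := Finset.sum_le_sum fun i _ => key i

lemma integrable_of_bounded' {α : Type*} [MeasurableSpace α] (μ : Measure α) [IsFiniteMeasure μ]
    {g : α → ℝ} (hg : Measurable g) {C : ℝ} (hC : ∀ x, |g x| ≤ C) : Integrable g μ :=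
  ⟨hg.aestronglyMeasurable,
    HasFiniteIntegral.of_bounded (ae_of_all _ fun x => by rw [Real.norm_eq_abs]; exact hC x)⟩


section Helpers

variable {α : Type*} [MeasurableSpace α]

lemma smul_finite (ν : Measure α) [IsFiniteMeasure ν] (c : ℝ) :
    IsFiniteMeasure (ENNReal.ofReal c • ν) := by
  refine ⟨?_⟩
  rw [Measure.smul_apply, smul_eq_mul]
  exact ENNReal.mul_lt_top ENNReal.ofReal_lt_top (measure_lt_top _ _)

lemma residual_mass (μ ν : Measure α) [IsProbabilityMeasure μ] [IsProbabilityMeasure ν]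
    (ε : ℝ) (hε0 : 0 ≤ ε) (hε1 : ε ≤ 1) (hle : ENNReal.ofReal (1 - ε) • ν ≤ μ) :
    (μ - ENNReal.ofReal (1 - ε) • ν) Set.univ = ENNReal.ofReal ε := by
  haveI := smul_finite ν (1 - ε)
  rw [Measure.sub_apply MeasurableSet.univ hle, Measure.smul_apply, smul_eq_mul]
  simp only [measure_univ, mul_one]
  rw [← ENNReal.ofReal_one, ← ENNReal.ofReal_sub _ (by linarith : (0:ℝ) ≤ 1 - ε)]
  norm_num

lemma decomp_int (μ ν : Measure α) [IsProbabilityMeasure μ] [IsProbabilityMeasure ν]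
    (ε : ℝ) (hε0 : 0 ≤ ε) (hε1 : ε ≤ 1) (hle : ENNReal.ofReal (1 - ε) • ν ≤ μ)
    {g : α → ℝ} (hg : Measurable g) {C : ℝ} (hC : ∀ x, |g x| ≤ C) :
    ∫ w, g w ∂μ = (∫ w, g w ∂(μ - ENNReal.ofReal (1 - ε) • ν)) + (1 - ε) * ∫ w, g w ∂ν := by
  haveI := smul_finite ν (1 - ε)
  haveI : IsFiniteMeasure (μ - ENNReal.ofReal (1 - ε) • ν) :=
    isFiniteMeasure_of_le μ Measure.sub_le
  conv_lhs => rw [← Measure.sub_add_cancel_of_le hle]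
  rw [integral_add_measure (integrable_of_bounded' _ hg hC) (integrable_of_bounded' _ hg hC),
    integral_smul_measure]
  rw [ENNReal.toReal_ofReal (by linarith : (0:ℝ) ≤ 1 - ε), smul_eq_mul]

lemma residual_bound (μ1 μ2 : Measure α) [IsFiniteMeasure μ1] [IsFiniteMeasure μ2]
    {g : α → ℝ} (hg : Measurable g) {C : ℝ} (hC : ∀ x, |g x| ≤ C)
    (ε : ℝ) (hε0 : 0 ≤ ε)
    (h1 : μ1 Set.univ = ENNReal.ofReal ε) (h2 : μ2 Set.univ = ENNReal.ofReal ε)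
    {M : ℝ} (hM0 : 0 ≤ M) (hM : ∀ u v, g u - g v ≤ M) :
    (∫ w, g w ∂μ1) - (∫ w, g w ∂μ2) ≤ ε * M := by
  rcases eq_or_lt_of_le hε0 with hε | hε
  · have hz1 : μ1 = 0 := by
      refine Measure.measure_univ_eq_zero.mp ?_
      rw [h1, ← hε]; simp
    have hz2 : μ2 = 0 := by
      refine Measure.measure_univ_eq_zero.mp ?_
      rw [h2, ← hε]; simp
    rw [hz1, hz2]
    simp [← hε]
  · have hεne : ENNReal.ofReal ε ≠ 0 := by
      simp only [ne_eq, ENNReal.ofReal_eq_zero, not_le]; linarith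
    have hpν1 : IsProbabilityMeasure ((ENNReal.ofReal ε)⁻¹ • μ1) := by
      constructor
      rw [Measure.smul_apply, h1, smul_eq_mul]
      exact ENNReal.inv_mul_cancel hεne ENNReal.ofReal_ne_top
    have hpν2 : IsProbabilityMeasure ((ENNReal.ofReal ε)⁻¹ • μ2) := by
      constructor
      rw [Measure.smul_apply, h2, smul_eq_mul]
      exact ENNReal.inv_mul_cancel hεne ENNReal.ofReal_ne_top
    set ν1 : Measure α := (ENNReal.ofReal ε)⁻¹ • μ1 with hv1
    set ν2 : Measure α := (ENNReal.ofReal ε)⁻¹ • μ2 with hv2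
    haveI := hpν1
    haveI := hpν2
    haveI : IsProbabilityMeasure (ν1.prod ν2) := by infer_instance
    have htr : ((ENNReal.ofReal ε)⁻¹).toReal = ε⁻¹ := by
      rw [ENNReal.toReal_inv, ENNReal.toReal_ofReal hε0]
    have h1' : ∫ w, g w ∂ν1 = ε⁻¹ * ∫ w, g w ∂μ1 := by
      rw [hv1, integral_smul_measure, htr, smul_eq_mul]
    have h2' : ∫ w, g w ∂ν2 = ε⁻¹ * ∫ w, g w ∂μ2 := by
      rw [hv2, integral_smul_measure, htr, smul_eq_mul]
    have hprod : (∫ w, g w ∂ν1) - (∫ w, g w ∂ν2) ≤ M := by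
      have e1 : ∫ w, g w ∂ν1 = ∫ q, g q.1 ∂(ν1.prod ν2) := by
        have hm1 : (ν1.prod ν2).map Prod.fst = ν1 := by
          rw [Measure.map_fst_prod, measure_univ, one_smul]
        conv_lhs => rw [← hm1]
        exact integral_map measurable_fst.aemeasurable hg.aestronglyMeasurable
      have e2 : ∫ w, g w ∂ν2 = ∫ q, g q.2 ∂(ν1.prod ν2) := by
        have hm2 : (ν1.prod ν2).map Prod.snd = ν2 := by
          rw [Measure.map_snd_prod, measure_univ, one_smul]
        conv_lhs => rw [← hm2]
        exact integral_map measurable_snd.aemeasurable hg.aestronglyMeasurable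
      have hi1 : Integrable (fun q : α × α => g q.1) (ν1.prod ν2) :=
        integrable_of_bounded' _ (hg.comp measurable_fst) (fun q => hC q.1)
      have hi2 : Integrable (fun q : α × α => g q.2) (ν1.prod ν2) :=
        integrable_of_bounded' _ (hg.comp measurable_snd) (fun q => hC q.2)
      rw [e1, e2, ← integral_sub hi1 hi2]
      calc ∫ q, (g q.1 - g q.2) ∂(ν1.prod ν2)
          ≤ ∫ _q, M ∂(ν1.prod ν2) :=
            integral_mono (hi1.sub hi2) (integrable_const _) fun q => hM q.1 q.2
        _ = M := by simp
    have h5 := mul_le_mul_of_nonneg_left hprod hε0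
    rw [h1', h2'] at h5
    have h6 : ε * (ε⁻¹ * (∫ w, g w ∂μ1) - ε⁻¹ * (∫ w, g w ∂μ2)) =
        (∫ w, g w ∂μ1) - (∫ w, g w ∂μ2) := by
      field_simp
    rw [h6] at h5
    exact h5

lemma coupling_bound {m : ℕ} (μ ν : Measure α) (Ψ0 : Measure (α × α)) [IsProbabilityMeasure Ψ0]
    (hfst : Ψ0.map Prod.fst = μ) (hsnd : Ψ0.map Prod.snd = ν)
    {g : α → ℝ} (hg : Measurable g) {C : ℝ} (hC : ∀ x, |g x| ≤ C)
    (S : Fin m → Set (α × α)) (hS : ∀ i, MeasurableSet (S i)) (o : Fin m → ℝ)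
    (pt : ∀ q : α × α, g q.1 - g q.2 ≤ ∑ i, Set.indicator (S i) (fun _ => o i) q) :
    (∫ w, g w ∂μ) - (∫ w, g w ∂ν) ≤ ∑ i, (Ψ0 (S i)).toReal * o i := by
  have e1 : ∫ w, g w ∂μ = ∫ q, g q.1 ∂Ψ0 := by
    rw [← hfst, integral_map measurable_fst.aemeasurable hg.aestronglyMeasurable]
  have e2 : ∫ w, g w ∂ν = ∫ q, g q.2 ∂Ψ0 := by
    rw [← hsnd, integral_map measurable_snd.aemeasurable hg.aestronglyMeasurable]
  have hi1 : Integrable (fun q : α × α => g q.1) Ψ0 :=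
    integrable_of_bounded' _ (hg.comp measurable_fst) (fun q => hC q.1)
  have hi2 : Integrable (fun q : α × α => g q.2) Ψ0 :=
    integrable_of_bounded' _ (hg.comp measurable_snd) (fun q => hC q.2)
  have hiI : Integrable (fun q : α × α => ∑ i, Set.indicator (S i) (fun _ => o i) q) Ψ0 :=
    integrable_finset_sum _ fun i _ => (integrable_const _).indicator (hS i)
  rw [e1, e2, ← integral_sub hi1 hi2]
  calc ∫ q, (g q.1 - g q.2) ∂Ψ0
      ≤ ∫ q, ∑ i, Set.indicator (S i) (fun _ => o i) q ∂Ψ0 :=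
        integral_mono (hi1.sub hi2) hiI pt
    _ = ∑ i, (Ψ0 (S i)).toReal * o i := by
        rw [integral_finset_sum _ fun i _ => (integrable_const _).indicator (hS i)]
        exact Finset.sum_congr rfl fun i _ => by
          rw [integral_indicator_const _ (hS i), smul_eq_mul]
          rfl

end Helpers

theorem stmt15 {n : ℕ} {X : Type*} [MeasurableSpace X] [StandardBorelSpace X] [Nonempty X]
    (P Q : Kernel (Fin n → X) (Fin n → X)) [IsMarkovKernel P] [IsMarkovKernel Q]
    (ε : ℝ) (hε0 : 0 ≤ ε) (hε1 : ε ≤ 1)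
    (hminor : ∀ x, ∀ A : Set (Fin n → X), MeasurableSet A →
      ENNReal.ofReal (1 - ε) * P x A ≤ Q x A)
    (Ψ : Fin n → (Fin n → X) → (Fin n → X) → Measure ((Fin n → X) × (Fin n → X)))
    (hΨ : ∀ (j : Fin n) (x y : Fin n → X), (∀ k, k ≠ j → x k = y k) →
      IsProbabilityMeasure (Ψ j x y) ∧
      (Ψ j x y).map Prod.fst = P x ∧ (Ψ j x y).map Prod.snd = P y)
    (W : Matrix (Fin n) (Fin n) ℝ)
    (hW : ∀ i j, W i j = sSup {r : ℝ | ∃ x y : Fin n → X, (∀ k, k ≠ j → x k = y k) ∧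
      r = (Ψ j x y {q | q.1 i ≠ q.2 i}).toReal})
    (What : Matrix (Fin n) (Fin n) ℝ) (hWhat : ∀ i j, What i j = W i j + ε) :
    IsWassersteinMatrix Q What := by
  classical
  have hp : ∃ p : Fin n → X, True := ⟨fun _ => Classical.arbitrary X, trivial⟩
  obtain ⟨p, -⟩ := hp
  -- boundedness and nonnegativity for the W-sets
  have hWbdd : ∀ i j, BddAbove {r : ℝ | ∃ x y : Fin n → X, (∀ k, k ≠ j → x k = y k) ∧
      r = (Ψ j x y {q | q.1 i ≠ q.2 i}).toReal} := by
    intro i j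
    refine ⟨1, ?_⟩
    rintro r ⟨x, y, hxy, rfl⟩
    haveI := (hΨ j x y hxy).1
    have h1 : Ψ j x y {q | q.1 i ≠ q.2 i} ≤ 1 := prob_le_one
    exact ENNReal.toReal_le_of_le_ofReal zero_le_one (by simpa using h1)
  have hWnn : ∀ i j, 0 ≤ W i j := by
    intro i j
    rw [hW]
    have hmem : ((Ψ j p p {q | q.1 i ≠ q.2 i}).toReal) ∈
        {r : ℝ | ∃ x y : Fin n → X, (∀ k, k ≠ j → x k = y k) ∧
          r = (Ψ j x y {q | q.1 i ≠ q.2 i}).toReal} := ⟨p, p, fun _ _ => rfl, rfl⟩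
    exact le_trans ENNReal.toReal_nonneg (le_csSup (hWbdd i j) hmem)
  -- measurability of the disagreement sets
  have hSmeas : ∀ i : Fin n, MeasurableSet {q : (Fin n → X) × (Fin n → X) | q.1 i ≠ q.2 i} := by
    intro i
    letI := upgradeStandardBorel X
    have h1 : Measurable fun q : (Fin n → X) × (Fin n → X) => q.1 i :=
      (measurable_pi_apply i).comp measurable_fst
    have h2 : Measurable fun q : (Fin n → X) × (Fin n → X) => q.2 i :=
      (measurable_pi_apply i).comp measurable_snd
    exact (MeasureTheory.StronglyMeasurable.measurableSet_eq_fun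
      h1.stronglyMeasurable h2.stronglyMeasurable).compl
  constructor
  · intro i j
    rw [hWhat]
    exact add_nonneg (hWnn i j) hε0
  intro f hf hbd j
  obtain ⟨C, hC⟩ := hbd
  -- basic facts about osc
  have hbddosc : ∀ i : Fin n, BddAbove {d : ℝ | ∃ x z : Fin n → X,
      (∀ k, k ≠ i → x k = z k) ∧ d = |f x - f z|} := by
    intro i
    refine ⟨C + C, ?_⟩
    rintro d ⟨x, z, -, rfl⟩
    obtain ⟨hx1, hx2⟩ := abs_le.mp (hC x)
    obtain ⟨hz1, hz2⟩ := abs_le.mp (hC z)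
    rw [abs_sub_le_iff]
    constructor <;> linarith
  have hosc0 : ∀ i : Fin n, 0 ≤ osc i f := by
    intro i
    exact le_csSup (hbddosc i) ⟨p, p, fun _ _ => rfl, by simp⟩
  have hoscle : ∀ (i : Fin n) (a b : Fin n → X), (∀ k, k ≠ i → a k = b k) →
      f a - f b ≤ osc i f := by
    intro i a b h
    exact (le_abs_self _).trans (le_csSup (hbddosc i) ⟨a, b, h, rfl⟩)
  have hM0 : 0 ≤ ∑ i, osc i f := Finset.sum_nonneg fun i _ => hosc0 i
  have hMpt : ∀ u v : Fin n → X, f u - f v ≤ ∑ i, osc i f := by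
    intro u v
    refine (telescope_aux f (fun i => osc i f) hoscle u v).trans ?_
    refine Finset.sum_le_sum fun i _ => ?_
    by_cases h : u i = v i <;> simp [h, hosc0 i]
  -- the decomposition of Q z
  have hle : ∀ z, ENNReal.ofReal (1 - ε) • (P z : Measure (Fin n → X)) ≤ Q z := by
    intro z
    refine Measure.le_iff.mpr fun s hs => ?_
    simpa [Measure.smul_apply, smul_eq_mul] using hminor z s hs
  have hRfin : ∀ z : Fin n → X,
      IsFiniteMeasure ((Q z : Measure (Fin n → X)) - ENNReal.ofReal (1 - ε) • P z) := by
    intro z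
    exact isFiniteMeasure_of_le (Q z) Measure.sub_le
  have hRmass : ∀ z : Fin n → X,
      ((Q z : Measure (Fin n → X)) - ENNReal.ofReal (1 - ε) • P z) Set.univ =
        ENNReal.ofReal ε :=
    fun z => residual_mass (Q z) (P z) ε hε0 hε1 (hle z)
  have hQint : ∀ z : Fin n → X, ∫ w, f w ∂(Q z) =
      (∫ w, f w ∂((Q z : Measure (Fin n → X)) - ENNReal.ofReal (1 - ε) • P z)) +
        (1 - ε) * ∫ w, f w ∂(P z) :=
    fun z => decomp_int (Q z) (P z) ε hε0 hε1 (hle z) hf hC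
  -- main per-pair estimate
  have main : ∀ x y : Fin n → X, (∀ k, k ≠ j → x k = y k) →
      (∫ z, f z ∂(Q x)) - (∫ z, f z ∂(Q y)) ≤ ∑ i, osc i f * What i j := by
    intro x y hxy
    obtain ⟨hΨp, hΨ1, hΨ2⟩ := hΨ j x y hxy
    haveI := hΨp
    -- coupling bound for P
    have hPd : (∫ w, f w ∂(P x)) - (∫ w, f w ∂(P y)) ≤ ∑ i, osc i f * W i j := by
      have pt : ∀ q : (Fin n → X) × (Fin n → X), f q.1 - f q.2 ≤
          ∑ i, Set.indicator {q' : (Fin n → X) × (Fin n → X) | q'.1 i ≠ q'.2 i}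
            (fun _ => osc i f) q := by
        intro q
        refine (telescope_aux f (fun i => osc i f) hoscle q.1 q.2).trans ?_
        refine Finset.sum_le_sum fun i _ => ?_
        by_cases h : q.1 i = q.2 i
        · simp [Set.indicator_apply, h]
        · simp [Set.indicator_apply, h]
      refine (coupling_bound (P x) (P y) (Ψ j x y) hΨ1 hΨ2 hf hC _ hSmeas
        (fun i => osc i f) pt).trans ?_
      refine Finset.sum_le_sum fun i _ => ?_
      rw [mul_comm]
      refine mul_le_mul_of_nonneg_left ?_ (hosc0 i)
      rw [hW]
      exact le_csSup (hWbdd i j) ⟨x, y, hxy, rfl⟩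
    -- bound for the residual part
    have hRd : (∫ w, f w ∂((Q x : Measure (Fin n → X)) - ENNReal.ofReal (1 - ε) • P x)) -
        (∫ w, f w ∂((Q y : Measure (Fin n → X)) - ENNReal.ofReal (1 - ε) • P y)) ≤
          ε * ∑ i, osc i f := by
      haveI := hRfin x
      haveI := hRfin y
      exact residual_bound _ _ hf hC ε hε0 (hRmass x) (hRmass y) hM0 hMpt
    -- combine
    have hsum : ∑ i, osc i f * What i j =
        (∑ i, osc i f * W i j) + ε * ∑ i, osc i f := by
      rw [Finset.mul_sum, ← Finset.sum_add_distrib]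
      exact Finset.sum_congr rfl fun i _ => by rw [hWhat]; ring
    have hS0 : 0 ≤ ∑ i, osc i f * W i j :=
      Finset.sum_nonneg fun i _ => mul_nonneg (hosc0 i) (hWnn i j)
    rw [hQint x, hQint y, hsum]
    have h3 : (1 - ε) * ((∫ w, f w ∂(P x)) - ∫ w, f w ∂(P y)) ≤
        (1 - ε) * ∑ i, osc i f * W i j :=
      mul_le_mul_of_nonneg_left hPd (by linarith)
    rw [mul_sub] at h3
    have h4 : (1 - ε) * ∑ i, osc i f * W i j ≤ ∑ i, osc i f * W i j := by nlinarith
    linarith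
  -- conclude via csSup_le
  refine csSup_le ⟨0, p, p, fun _ _ => rfl, by simp⟩ ?_
  rintro d ⟨x, z, hxz, rfl⟩
  rw [abs_sub_le_iff]
  exact ⟨main x z hxz, main z x fun k hk => (hxz k hk).symm⟩
end

section
/- Assume (S1)–(S2) with potentials g_1,…,g_{h−1} (any h−1 potentials satisfying (S2)). For x, x' ∈ X define num(x, x') = ∫ [Π_{j=1}^{h−1} g_j(z_j)] · m(x, z_1) · [Π_{j=2}^{h−1} m(z_{j−1}, z_j)] · m(z_{h−1}, x') ν_0^{⊗(h−1)}(dz_1⋯dz_{h−1}) (for h = 1 read num(x,x') = m(x,x')), and den(x) = ∫ num(x, x') ν_0(dx'). Then den(x) > 0 for every x ∈ X, and for all x, x' ∈ X: δ^{(1−h)/h}·σ− ≤ num(x, x')/den(x) ≤ σ+. In other words, the h-step conditional transition density of the hidden chain given the intermediate observations is bounded below by δ^{(1−h)/h}·σ− and above by σ+. -/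
open MeasureTheory Finset

/-- Extension of `z : X^{h-1}` (interpreted as states at times `1, …, h-1`) by the boundary
states `x1` at time `0` and `xh1` at times `≥ h`. -/
noncomputable def ext1 {X : Type*} (x1 xh1 : X) {N : ℕ} (z : Fin N → X) (t : ℕ) : X :=
  if ht : 1 ≤ t ∧ t ≤ N then z ⟨t - 1, by omega⟩ else if t = 0 then x1 else xh1

/-- The `h`-step minorisation of assumption (S1):
`∫ ∏_{j=1}^{h} m(x_j, x_{j+1}) ν₀(dx_2) ⋯ ν₀(dx_h) ≥ σ₋` for all `x_1, x_{h+1}`. -/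
def S1minor {X : Type*} [MeasurableSpace X] (ν0 : Measure X) (mker : X → X → ℝ)
    (h : ℕ) (σm : ℝ) : Prop :=
  ∀ x1 xh1 : X, σm ≤
    ∫ z : Fin (h - 1) → X,
      ∏ j ∈ Finset.range h, mker (ext1 x1 xh1 z j) (ext1 x1 xh1 z (j + 1))
      ∂(Measure.pi fun _ => ν0)

/-- Extension of `z : X^{u-s+1}` (interpreted as states at times `s, …, u`) by the boundary
states `xm` at times `< s` and `xp` at times `> u`. -/
noncomputable def extBlock {X : Type*} (s u : ℕ) (xm xp : X) (z : Fin (u - s + 1) → X)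
    (t : ℕ) : X :=
  if ht : s ≤ t ∧ t ≤ u then z ⟨t - s, by omega⟩ else if t < s then xm else xp

/-- `num(x, x')`: the unnormalized `h`-step transition density from `x` to `x'` given the
intermediate observations, `∫ [Π_{j=1}^{h-1} g_j(z_j)] m(x,z_1) [Π_{j=2}^{h-1} m(z_{j-1},z_j)]
m(z_{h-1}, x') ν₀^{⊗(h-1)}(dz)` (read as `m(x,x')` for `h = 1`). -/
noncomputable def hStepNum {X : Type*} [MeasurableSpace X] (ν0 : Measure X)
    (mker : X → X → ℝ) (g : ℕ → X → ℝ) (h : ℕ) (x x' : X) : ℝ :=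
  ∫ z : Fin (h - 1) → X,
    (∏ j ∈ Finset.range h, mker (ext1 x x' z j) (ext1 x x' z (j + 1))) *
      ∏ j ∈ Finset.Icc 1 (h - 1), g j (ext1 x x' z j)
    ∂(Measure.pi fun _ => ν0)

/-- `den(x) = ∫ num(x, x') ν₀(dx')`. -/
noncomputable def hStepDen {X : Type*} [MeasurableSpace X] (ν0 : Measure X)
    (mker : X → X → ℝ) (g : ℕ → X → ℝ) (h : ℕ) (x : X) : ℝ :=
  ∫ x', hStepNum ν0 mker g h x x' ∂ν0

set_option linter.unusedSectionVars false

section MainAux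
variable {X : Type*} [MeasurableSpace X]

lemma ext1_pos (x x' : X) {N : ℕ} (z : Fin N → X) {t : ℕ} (h1 : 1 ≤ t) (h2 : t ≤ N) :
    ext1 x x' z t = z ⟨t - 1, by omega⟩ := by
  rw [ext1, dif_pos ⟨h1, h2⟩]

lemma ext1_gt (x x' : X) {N : ℕ} (z : Fin N → X) {t : ℕ} (h : N < t) :
    ext1 x x' z t = x' := by
  rw [ext1, dif_neg (by omega), if_neg (by omega)]

lemma ext1_indep (x x' y' : X) {N : ℕ} (z : Fin N → X) {t : ℕ} (ht : t ≤ N) :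
    ext1 x x' z t = ext1 x y' z t := by
  unfold ext1
  split_ifs with h1 h2
  · rfl
  · rfl
  · omega

lemma ext1_snoc (x x' : X) {n : ℕ} (w : Fin n → X) (y : X) {t : ℕ} (ht : t ≤ n) :
    ext1 x x' (Fin.snoc w y) t = ext1 x x' w t := by
  unfold ext1
  by_cases h1 : 1 ≤ t
  · rw [dif_pos ⟨h1, by omega⟩, dif_pos ⟨h1, ht⟩]
    have hlt : t - 1 < n := by omega
    have : (⟨t - 1, by omega⟩ : Fin (n + 1)) = Fin.castSucc ⟨t - 1, hlt⟩ := rfl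
    rw [this, Fin.snoc_castSucc]
  · rw [dif_neg (by omega), dif_neg (by omega)]

lemma ext1_snoc_top (x x' : X) {n : ℕ} (w : Fin n → X) (y : X) :
    ext1 x x' (Fin.snoc w y) (n + 1) = y := by
  rw [ext1, dif_pos ⟨by omega, le_refl _⟩]
  have : (⟨n + 1 - 1, by omega⟩ : Fin (n + 1)) = Fin.last n := rfl
  rw [this, Fin.snoc_last]

lemma measurable_ext1 (x x' : X) {N : ℕ} (t : ℕ) :
    Measurable fun z : Fin N → X => ext1 x x' z t := by
  unfold ext1
  by_cases h : 1 ≤ t ∧ t ≤ N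
  · simp only [dif_pos h]; exact measurable_pi_apply _
  · simp only [dif_neg h]; exact measurable_const

lemma measurable_ext1_prod (x : X) {N : ℕ} (t : ℕ) :
    Measurable fun p : X × (Fin N → X) => ext1 x p.1 p.2 t := by
  unfold ext1
  by_cases h : 1 ≤ t ∧ t ≤ N
  · simp only [dif_pos h]; exact (measurable_pi_apply _).comp measurable_snd
  · simp only [dif_neg h]
    by_cases h0 : t = 0
    · simp only [if_pos h0]; exact measurable_const
    · simp only [if_neg h0]; exact measurable_fst

/-- The chain-kernel product over `range k`. -/
noncomputable def chainF {X : Type*} (mker : X → X → ℝ) (x x' : X) {N : ℕ}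
    (k : ℕ) (z : Fin N → X) : ℝ :=
  ∏ j ∈ Finset.range k, mker (ext1 x x' z j) (ext1 x x' z (j + 1))

variable {mker : X → X → ℝ} {σp : ℝ}

lemma chainF_nonneg (hm : ∀ x x', 0 ≤ mker x x') (x x' : X) {N : ℕ} (k : ℕ)
    (z : Fin N → X) : 0 ≤ chainF mker x x' k z :=
  Finset.prod_nonneg fun _ _ => hm _ _

lemma chainF_le (hm0 : ∀ x x', 0 ≤ mker x x') (hm : ∀ x x', mker x x' ≤ σp)
    (x x' : X) {N : ℕ} (k : ℕ) (z : Fin N → X) : chainF mker x x' k z ≤ σp ^ k := by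
  calc chainF mker x x' k z ≤ ∏ _j ∈ Finset.range k, σp :=
        Finset.prod_le_prod (fun _ _ => hm0 _ _) (fun _ _ => hm _ _)
    _ = σp ^ k := by rw [Finset.prod_const, Finset.card_range]

lemma measurable_chainF (hm : Measurable (Function.uncurry mker)) (x x' : X) {N : ℕ}
    (k : ℕ) : Measurable fun z : Fin N → X => chainF mker x x' k z := by
  apply Finset.measurable_prod
  intro j _
  exact hm.comp ((measurable_ext1 x x' j).prodMk (measurable_ext1 x x' (j + 1)))

lemma measurable_chainF_prod (hm : Measurable (Function.uncurry mker)) (x : X) {N : ℕ}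
    (k : ℕ) : Measurable fun p : X × (Fin N → X) => chainF mker x p.1 k p.2 := by
  apply Finset.measurable_prod
  intro j _
  exact hm.comp ((measurable_ext1_prod x j).prodMk (measurable_ext1_prod x (j + 1)))

lemma integrable_of_range {α : Type*} [MeasurableSpace α] {μ : Measure α}
    [IsFiniteMeasure μ] {f : α → ℝ} (hf : Measurable f) (C : ℝ)
    (h0 : ∀ a, 0 ≤ f a) (h : ∀ a, f a ≤ C) : Integrable f μ :=
  (integrable_const C).mono' hf.aestronglyMeasurable
    (Filter.Eventually.of_forall fun a => by
      rw [Real.norm_eq_abs, abs_of_nonneg (h0 a)]; exact h a)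

lemma chainF_snoc (x : X) {n : ℕ} (w : Fin n → X) (y : X) :
    chainF mker x x (n + 1) (Fin.snoc w y)
      = chainF mker x x n w * mker (ext1 x x w n) y := by
  unfold chainF
  rw [Finset.prod_range_succ]
  congr 1
  · refine Finset.prod_congr rfl fun j hj => ?_
    have hj' : j < n := Finset.mem_range.mp hj
    rw [ext1_snoc x x w y (by omega), ext1_snoc x x w y (by omega)]
  · rw [ext1_snoc x x w y (le_refl n), ext1_snoc_top]

lemma chainF_split (x x' : X) {n : ℕ} (z : Fin n → X) :
    chainF mker x x' (n + 1) z = chainF mker x x n z * mker (ext1 x x z n) x' := by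
  unfold chainF
  rw [Finset.prod_range_succ]
  congr 1
  · refine Finset.prod_congr rfl fun j hj => ?_
    have hj' : j < n := Finset.mem_range.mp hj
    rw [ext1_indep x x' x z (by omega), ext1_indep x x' x z (by omega)]
  · rw [ext1_indep x x' x z (le_refl n), ext1_gt x x' z (by omega)]

lemma chainF_integral (ν0 : Measure X) [IsProbabilityMeasure ν0]
    (hm_meas : Measurable (Function.uncurry mker)) (hm_nonneg : ∀ x x', 0 ≤ mker x x')
    (hm_le : ∀ x x', mker x x' ≤ σp) (hm_int : ∀ x, ∫ x', mker x x' ∂ν0 = 1) :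
    ∀ (n : ℕ) (x : X),
      ∫ z : Fin n → X, chainF mker x x n z ∂(Measure.pi fun _ => ν0) = 1 := by
  intro n
  induction n with
  | zero => intro x; simp [chainF]
  | succ n ih =>
    intro x
    have hmp := measurePreserving_piFinSuccAbove (fun _ : Fin (n + 1) => ν0) (Fin.last n)
    set e := MeasurableEquiv.piFinSuccAbove (fun _ : Fin (n + 1) => X) (Fin.last n) with he
    have hsymm : ∀ p : X × (Fin n → X), e.symm p = Fin.snoc p.2 p.1 := by
      intro p
      rw [he]
      rw [MeasurableEquiv.piFinSuccAbove_symm_apply]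
      exact Fin.insertNth_last' p.1 p.2
    have hint : ∫ z : Fin (n + 1) → X, chainF mker x x (n + 1) z ∂(Measure.pi fun _ => ν0)
        = ∫ p : X × (Fin n → X), chainF mker x x (n + 1) (e.symm p)
            ∂(ν0.prod (Measure.pi fun _ => ν0)) := by
      rw [← (MeasurePreserving.symm e hmp).integral_comp e.symm.measurableEmbedding]
    rw [hint]
    have hre : ∀ p : X × (Fin n → X), chainF mker x x (n + 1) (e.symm p)
        = chainF mker x x n p.2 * mker (ext1 x x p.2 n) p.1 := by
      intro p; rw [hsymm, chainF_snoc]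
    calc ∫ p : X × (Fin n → X), chainF mker x x (n + 1) (e.symm p)
            ∂(ν0.prod (Measure.pi fun _ => ν0))
        = ∫ p : X × (Fin n → X), chainF mker x x n p.2 * mker (ext1 x x p.2 n) p.1
            ∂(ν0.prod (Measure.pi fun _ => ν0)) := by
          exact integral_congr_ae (Filter.Eventually.of_forall hre)
      _ = ∫ w : Fin n → X, ∫ y : X, chainF mker x x n w * mker (ext1 x x w n) y
            ∂ν0 ∂(Measure.pi fun _ => ν0) := by
          apply MeasureTheory.integral_prod_symm
          · apply integrable_of_range
            · exact ((measurable_chainF hm_meas x x n).comp measurable_snd).mul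
                (hm_meas.comp (((measurable_ext1 x x n).comp measurable_snd).prodMk
                  measurable_fst))
            · intro p
              exact mul_nonneg (chainF_nonneg hm_nonneg _ _ _ _) (hm_nonneg _ _)
            · intro p
              have h1 := chainF_le hm_nonneg hm_le x x n p.2
              have h2 := hm_le (ext1 x x p.2 n) p.1
              have hσp0 : 0 ≤ σp := le_trans (hm_nonneg x x) (hm_le x x)
              exact mul_le_mul h1 h2 (hm_nonneg _ _) (by positivity)
      _ = ∫ w : Fin n → X, chainF mker x x n w ∂(Measure.pi fun _ => ν0) := by
          apply integral_congr_ae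
          apply Filter.Eventually.of_forall
          intro w
          show (∫ y : X, chainF mker x x n w * mker (ext1 x x w n) y ∂ν0)
              = chainF mker x x n w
          rw [MeasureTheory.integral_const_mul, hm_int, mul_one]
      _ = 1 := ih x

noncomputable def gProd {X : Type*} (g : ℕ → X → ℝ) (n : ℕ) (x0 : X)
    (z : Fin n → X) : ℝ :=
  ∏ j ∈ Finset.Icc 1 n, g j (ext1 x0 x0 z j)

variable {g : ℕ → X → ℝ} {n : ℕ} {x0 : X}

lemma gProd_pos (hg : ∀ t x, 0 < g t x) (z : Fin n → X) : 0 < gProd g n x0 z :=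
  Finset.prod_pos fun _ _ => hg _ _

lemma measurable_gProd (hg : ∀ t, Measurable (g t)) :
    Measurable (gProd g n x0) :=
  Finset.measurable_prod _ fun j _ => (hg j).comp (measurable_ext1 x0 x0 j)

lemma gProd_eq (x x' : X) (z : Fin n → X) :
    (∏ j ∈ Finset.Icc 1 n, g j (ext1 x x' z j)) = gProd g n x0 z := by
  refine Finset.prod_congr rfl fun j hj => ?_
  obtain ⟨h1, h2⟩ := Finset.mem_Icc.mp hj
  rw [ext1_pos x x' z h1 h2, ext1_pos x0 x0 z h1 h2]

lemma gProd_ratio {D : ℝ} (hg_pos : ∀ t x, 0 < g t x)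
    (hg_ratio : ∀ t (x y : X), g t x ≤ D * g t y) (z w : Fin n → X) :
    gProd g n x0 z ≤ D ^ n * gProd g n x0 w := by
  calc gProd g n x0 z ≤ ∏ j ∈ Finset.Icc 1 n, D * g j (ext1 x0 x0 w j) :=
        Finset.prod_le_prod (fun j _ => (hg_pos _ _).le) (fun j _ => hg_ratio _ _ _)
    _ = D ^ n * gProd g n x0 w := by
        rw [Finset.prod_mul_distrib, Finset.prod_const, Nat.card_Icc]
        simp [gProd]

end MainAux

theorem stmt16 {X : Type*} [MeasurableSpace X] [StandardBorelSpace X]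
    (ν0 : Measure X) [IsProbabilityMeasure ν0]
    (mker : X → X → ℝ) (g : ℕ → X → ℝ)
    (h : ℕ) (hh : 1 ≤ h) (σm σp δ : ℝ)
    (hσm : 0 < σm) (hσp : 0 < σp) (hδ : 1 ≤ δ)
    -- (S1)
    (hm_meas : Measurable (Function.uncurry mker))
    (hm_nonneg : ∀ x x', 0 ≤ mker x x')
    (hm_le : ∀ x x', mker x x' ≤ σp)
    (hm_int : ∀ x, ∫ x', mker x x' ∂ν0 = 1)
    (hS1 : S1minor ν0 mker h σm)
    -- (S2)
    (hg_meas : ∀ t, Measurable (g t))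
    (hg_pos : ∀ t x, 0 < g t x)
    (hg_bdd : ∀ t, ∃ C, ∀ x, g t x ≤ C)
    (hg_ratio : ∀ t (x y : X), g t x ≤ δ ^ ((h : ℝ))⁻¹ * g t y) :
    (∀ x : X, 0 < hStepDen ν0 mker g h x) ∧
    ∀ x x' : X,
      δ ^ ((1 - (h : ℝ)) / h) * σm ≤ hStepNum ν0 mker g h x x' / hStepDen ν0 mker g h x ∧
      hStepNum ν0 mker g h x x' / hStepDen ν0 mker g h x ≤ σp := by
  obtain ⟨n, rfl⟩ : ∃ n, h = n + 1 := ⟨h - 1, by omega⟩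
  clear hh hg_bdd
  have hσp0 : 0 ≤ σp := hσp.le
  have hδ0 : (0 : ℝ) < δ := lt_of_lt_of_le one_pos hδ
  have hXne : Nonempty X := by
    by_contra hc
    have h1 : ν0 Set.univ = 1 := measure_univ
    rw [Set.univ_eq_empty_iff.mpr (not_nonempty_iff.mp hc), measure_empty] at h1
    exact zero_ne_one h1
  obtain ⟨x0⟩ := hXne
  set D : ℝ := δ ^ (((n + 1 : ℕ) : ℝ))⁻¹ with hD
  have hD1 : 1 ≤ D := by
    rw [hD]
    calc (1 : ℝ) = δ ^ (0 : ℝ) := (Real.rpow_zero δ).symm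
      _ ≤ δ ^ (((n + 1 : ℕ) : ℝ))⁻¹ :=
          Real.rpow_le_rpow_of_exponent_le hδ (by positivity)
  have hD0 : 0 < D := lt_of_lt_of_le one_pos hD1
  set A : ℝ := D ^ n with hA
  have hA0 : 0 < A := pow_pos hD0 n
  set c : ℝ := gProd g n x0 (fun _ => x0) with hc
  have hc0 : 0 < c := gProd_pos hg_pos _
  have hGpos : ∀ z : Fin n → X, 0 < gProd g n x0 z := gProd_pos hg_pos
  have hGratio : ∀ z w : Fin n → X, gProd g n x0 z ≤ A * gProd g n x0 w := by
    intro z w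
    rw [hA]
    exact gProd_ratio hg_pos (fun t x y => hg_ratio t x y) z w
  have hGlb : ∀ z w : Fin n → X, A⁻¹ * gProd g n x0 w ≤ gProd g n x0 z := by
    intro z w
    rw [inv_mul_le_iff₀ hA0]
    exact hGratio w z
  have hGub : ∀ z : Fin n → X, gProd g n x0 z ≤ A * c := fun z => hGratio z _
  have hGmeas : Measurable (gProd g n x0) := measurable_gProd hg_meas
  -- integrability
  have hIK : ∀ x : X, Integrable (fun z : Fin n → X => chainF mker x x n z)
      (Measure.pi fun _ => ν0) := fun x =>
    integrable_of_range (measurable_chainF hm_meas x x n) (σp ^ n)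
      (chainF_nonneg hm_nonneg x x n) (chainF_le hm_nonneg hm_le x x n)
  have hIKG : ∀ x : X, Integrable
      (fun z : Fin n → X => chainF mker x x n z * gProd g n x0 z)
      (Measure.pi fun _ => ν0) := by
    intro x
    refine integrable_of_range ((measurable_chainF hm_meas x x n).mul hGmeas)
      (σp ^ n * (A * c)) (fun z => mul_nonneg (chainF_nonneg hm_nonneg x x n z)
        (hGpos z).le) (fun z => ?_)
    exact mul_le_mul (chainF_le hm_nonneg hm_le x x n z) (hGub z) (hGpos z).le
      (by positivity)
  have hIP : ∀ x x' : X, Integrable (fun z : Fin n → X => chainF mker x x' (n + 1) z)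
      (Measure.pi fun _ => ν0) := fun x x' =>
    integrable_of_range (measurable_chainF hm_meas x x' (n + 1)) (σp ^ (n + 1))
      (chainF_nonneg hm_nonneg x x' (n + 1)) (chainF_le hm_nonneg hm_le x x' (n + 1))
  have hIPG : ∀ x x' : X, Integrable
      (fun z : Fin n → X => chainF mker x x' (n + 1) z * gProd g n x0 z)
      (Measure.pi fun _ => ν0) := by
    intro x x'
    refine integrable_of_range ((measurable_chainF hm_meas x x' (n + 1)).mul hGmeas)
      (σp ^ (n + 1) * (A * c)) (fun z => mul_nonneg
        (chainF_nonneg hm_nonneg x x' (n + 1) z) (hGpos z).le) (fun z => ?_)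
    exact mul_le_mul (chainF_le hm_nonneg hm_le x x' (n + 1) z) (hGub z) (hGpos z).le
      (by positivity)
  have hKint : ∀ x : X,
      ∫ z : Fin n → X, chainF mker x x n z ∂(Measure.pi fun _ => ν0) = 1 :=
    chainF_integral ν0 hm_meas hm_nonneg hm_le hm_int n
  have hS1' : ∀ x x' : X,
      σm ≤ ∫ z : Fin n → X, chainF mker x x' (n + 1) z ∂(Measure.pi fun _ => ν0) :=
    fun x x' => hS1 x x'
  -- numerator identification
  have hnum_eq : ∀ x x' : X, hStepNum ν0 mker g (n + 1) x x'
      = ∫ z : Fin n → X, chainF mker x x' (n + 1) z * gProd g n x0 z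
          ∂(Measure.pi fun _ => ν0) := by
    intro x x'
    show (∫ z : Fin n → X,
        (∏ j ∈ Finset.range (n + 1), mker (ext1 x x' z j) (ext1 x x' z (j + 1))) *
          ∏ j ∈ Finset.Icc 1 n, g j (ext1 x x' z j) ∂(Measure.pi fun _ => ν0)) = _
    refine integral_congr_ae (Filter.Eventually.of_forall fun z => ?_)
    show (∏ j ∈ Finset.range (n + 1), mker (ext1 x x' z j) (ext1 x x' z (j + 1))) *
        (∏ j ∈ Finset.Icc 1 n, g j (ext1 x x' z j))
      = chainF mker x x' (n + 1) z * gProd g n x0 z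
    rw [gProd_eq x x' z]
    rfl
  -- denominator identification
  have hden_eq : ∀ x : X, hStepDen ν0 mker g (n + 1) x
      = ∫ z : Fin n → X, chainF mker x x n z * gProd g n x0 z
          ∂(Measure.pi fun _ => ν0) := by
    intro x
    have hjoint : Integrable (Function.uncurry fun (x' : X) (z : Fin n → X) =>
        chainF mker x x' (n + 1) z * gProd g n x0 z)
        (ν0.prod (Measure.pi fun _ => ν0)) := by
      refine integrable_of_range ((measurable_chainF_prod hm_meas x (n + 1)).mul
        (hGmeas.comp measurable_snd)) (σp ^ (n + 1) * (A * c)) (fun p => mul_nonneg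
          (chainF_nonneg hm_nonneg _ _ _ _) (hGpos _).le) (fun p => ?_)
      exact mul_le_mul (chainF_le hm_nonneg hm_le x p.1 (n + 1) p.2) (hGub p.2)
        (hGpos p.2).le (by positivity)
    calc hStepDen ν0 mker g (n + 1) x
        = ∫ x', hStepNum ν0 mker g (n + 1) x x' ∂ν0 := rfl
      _ = ∫ x', ∫ z : Fin n → X, chainF mker x x' (n + 1) z * gProd g n x0 z
            ∂(Measure.pi fun _ => ν0) ∂ν0 :=
          integral_congr_ae (Filter.Eventually.of_forall fun x' => hnum_eq x x')
      _ = ∫ z : Fin n → X, ∫ x', chainF mker x x' (n + 1) z * gProd g n x0 z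
            ∂ν0 ∂(Measure.pi fun _ => ν0) := integral_integral_swap hjoint
      _ = ∫ z : Fin n → X, chainF mker x x n z * gProd g n x0 z
            ∂(Measure.pi fun _ => ν0) := by
          refine integral_congr_ae (Filter.Eventually.of_forall fun z => ?_)
          show (∫ x', chainF mker x x' (n + 1) z * gProd g n x0 z ∂ν0) = _
          have hpt : ∀ x' : X, chainF mker x x' (n + 1) z * gProd g n x0 z
              = (chainF mker x x n z * gProd g n x0 z) * mker (ext1 x x z n) x' := by
            intro x'; rw [chainF_split]; ring
          rw [integral_congr_ae (Filter.Eventually.of_forall hpt),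
            MeasureTheory.integral_const_mul, hm_int, mul_one]
  -- lower bound on denominator
  have hden_lb : ∀ x : X, A⁻¹ * c ≤ hStepDen ν0 mker g (n + 1) x := by
    intro x
    rw [hden_eq x]
    have h1 : A⁻¹ * c = ∫ z : Fin n → X, (A⁻¹ * c) * chainF mker x x n z
        ∂(Measure.pi fun _ => ν0) := by
      rw [MeasureTheory.integral_const_mul, hKint, mul_one]
    rw [h1]
    refine integral_mono ((hIK x).const_mul _) (hIKG x) fun z => ?_
    calc (A⁻¹ * c) * chainF mker x x n z = chainF mker x x n z * (A⁻¹ * c) := by ring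
      _ ≤ chainF mker x x n z * gProd g n x0 z :=
          mul_le_mul_of_nonneg_left (hGlb z _) (chainF_nonneg hm_nonneg x x n z)
  have hden_pos : ∀ x : X, 0 < hStepDen ν0 mker g (n + 1) x := fun x =>
    lt_of_lt_of_le (by positivity) (hden_lb x)
  -- upper bound on numerator
  have hnum_le : ∀ x x' : X, hStepNum ν0 mker g (n + 1) x x'
      ≤ σp * hStepDen ν0 mker g (n + 1) x := by
    intro x x'
    rw [hnum_eq x x', hden_eq x, ← MeasureTheory.integral_const_mul]
    refine integral_mono (hIPG x x') ((hIKG x).const_mul σp) fun z => ?_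
    rw [chainF_split]
    have h1 : chainF mker x x n z * mker (ext1 x x z n) x' ≤ chainF mker x x n z * σp :=
      mul_le_mul_of_nonneg_left (hm_le _ _) (chainF_nonneg hm_nonneg x x n z)
    calc chainF mker x x n z * mker (ext1 x x z n) x' * gProd g n x0 z
        ≤ chainF mker x x n z * σp * gProd g n x0 z :=
          mul_le_mul_of_nonneg_right h1 (hGpos z).le
      _ = σp * (chainF mker x x n z * gProd g n x0 z) := by ring
  -- pointwise lower bound on numerator
  have hnum_ge_pt : ∀ (x x' : X) (w : Fin n → X),
      (A⁻¹ * gProd g n x0 w) * σm ≤ hStepNum ν0 mker g (n + 1) x x' := by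
    intro x x' w
    rw [hnum_eq x x']
    have h0 : 0 ≤ A⁻¹ * gProd g n x0 w :=
      mul_nonneg (by positivity) (hGpos w).le
    calc (A⁻¹ * gProd g n x0 w) * σm
        ≤ (A⁻¹ * gProd g n x0 w) *
            ∫ z : Fin n → X, chainF mker x x' (n + 1) z ∂(Measure.pi fun _ => ν0) :=
          mul_le_mul_of_nonneg_left (hS1' x x') h0
      _ = ∫ z : Fin n → X, (A⁻¹ * gProd g n x0 w) * chainF mker x x' (n + 1) z
            ∂(Measure.pi fun _ => ν0) := (MeasureTheory.integral_const_mul _ _).symm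
      _ ≤ ∫ z : Fin n → X, chainF mker x x' (n + 1) z * gProd g n x0 z
            ∂(Measure.pi fun _ => ν0) := by
          refine integral_mono ((hIP x x').const_mul _) (hIPG x x') fun z => ?_
          calc (A⁻¹ * gProd g n x0 w) * chainF mker x x' (n + 1) z
              = chainF mker x x' (n + 1) z * (A⁻¹ * gProd g n x0 w) := by ring
            _ ≤ chainF mker x x' (n + 1) z * gProd g n x0 z :=
                mul_le_mul_of_nonneg_left (hGlb z w)
                  (chainF_nonneg hm_nonneg x x' (n + 1) z)
  -- lower bound on numerator in terms of denominator
  have hnum_ge : ∀ x x' : X, (A⁻¹ * σm) * hStepDen ν0 mker g (n + 1) x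
      ≤ hStepNum ν0 mker g (n + 1) x x' := by
    intro x x'
    have key : ∫ z : Fin n → X, (A⁻¹ * σm) * (chainF mker x x n z * gProd g n x0 z)
          ∂(Measure.pi fun _ => ν0)
        ≤ ∫ z : Fin n → X, chainF mker x x n z * hStepNum ν0 mker g (n + 1) x x'
          ∂(Measure.pi fun _ => ν0) := by
      refine integral_mono ((hIKG x).const_mul _) ((hIK x).mul_const _) fun z => ?_
      have hpt := hnum_ge_pt x x' z
      calc (A⁻¹ * σm) * (chainF mker x x n z * gProd g n x0 z)
          = chainF mker x x n z * ((A⁻¹ * gProd g n x0 z) * σm) := by ring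
        _ ≤ chainF mker x x n z * hStepNum ν0 mker g (n + 1) x x' :=
            mul_le_mul_of_nonneg_left hpt (chainF_nonneg hm_nonneg x x n z)
    calc (A⁻¹ * σm) * hStepDen ν0 mker g (n + 1) x
        = ∫ z : Fin n → X, (A⁻¹ * σm) * (chainF mker x x n z * gProd g n x0 z)
            ∂(Measure.pi fun _ => ν0) := by
          rw [MeasureTheory.integral_const_mul, hden_eq x]
      _ ≤ ∫ z : Fin n → X, chainF mker x x n z * hStepNum ν0 mker g (n + 1) x x'
            ∂(Measure.pi fun _ => ν0) := key
      _ = (∫ z : Fin n → X, chainF mker x x n z ∂(Measure.pi fun _ => ν0)) *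
            hStepNum ν0 mker g (n + 1) x x' := MeasureTheory.integral_mul_const _ _
      _ = hStepNum ν0 mker g (n + 1) x x' := by rw [hKint, one_mul]
  -- conclusion
  refine ⟨hden_pos, fun x x' => ?_⟩
  have hexp : δ ^ ((1 - ((n + 1 : ℕ) : ℝ)) / ((n + 1 : ℕ) : ℝ)) = A⁻¹ := by
    have hne : ((n : ℝ) + 1) ≠ 0 := by positivity
    have h1 : (1 - ((n + 1 : ℕ) : ℝ)) / ((n + 1 : ℕ) : ℝ)
        = -((((n + 1 : ℕ) : ℝ))⁻¹ * (n : ℕ)) := by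
      push_cast
      ring
    rw [h1, Real.rpow_neg hδ0.le, Real.rpow_mul hδ0.le, Real.rpow_natCast, hA, hD]
  constructor
  · rw [hexp, le_div_iff₀ (hden_pos x)]
    calc A⁻¹ * σm * hStepDen ν0 mker g (n + 1) x
        = (A⁻¹ * σm) * hStepDen ν0 mker g (n + 1) x := by ring
      _ ≤ hStepNum ν0 mker g (n + 1) x x' := hnum_ge x x'
  · rw [div_le_iff₀ (hden_pos x)]
    exact hnum_le x x'
end
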